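/- arXiv:1103.3775 — 2 statements merged into one kernel-verified Lean document; each statement's English description precedes it below -/
import Mathlib

section
/- Let S be a complete RN module over ℝ with base (Ω, F, P) admitting G(S) (i.e. P(G(S)) > 0). Then δ_{G(S)}(ε) ≤ (ε/2)·I_{G(S)} for every ε ∈ L⁰(F,ℝ) with ε ≥ 0 and 0 < ε ≤ 2 on G(S). -/
open MeasureTheory Filter Set

noncomputable section

namespace RNM

variable {Ω : Type*} [MeasurableSpace Ω]

/-- `L⁰(F, ℝ)`: equivalence classes of real random variables mod a.e. equality. -/
abbrev L0 (μ : Measure Ω) : Type _ := Ω →ₘ[μ] ℝ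

open Classical in
/-- The equivalence class of the indicator function of a (measurable) set. -/
noncomputable def ind (μ : Measure Ω) (A : Set Ω) : L0 μ :=
  if h : MeasurableSet A then
    AEEqFun.mk (A.indicator fun _ => (1 : ℝ)) (aestronglyMeasurable_const.indicator h)
  else 0

/-- The constant function, as an element of `L⁰`. -/
noncomputable def cst (μ : Measure Ω) (r : ℝ) : L0 μ := AEEqFun.const Ω r

/-- `A ⊂ B` modulo null sets. -/
def aeSub (μ : Measure Ω) (A B : Set Ω) : Prop := μ (A \ B) = 0

/-- `A = B` modulo null sets. -/
def aeEqS (μ : Measure Ω) (A B : Set Ω) : Prop := μ ((A \ B) ∪ (B \ A)) = 0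

variable {μ : Measure Ω} {S : Type*} [AddCommGroup S]

/-- The axioms of a random normed module over ℝ with base `(Ω, F, μ)`: `S` is a left module
over the algebra `L⁰(F,ℝ)` (with module multiplication `sm`) and `nrm` is an `L⁰`-norm. -/
structure IsRNModule (μ : Measure Ω) (sm : L0 μ → S → S) (nrm : S → L0 μ) : Prop where
  smul_add : ∀ ξ x y, sm ξ (x + y) = sm ξ x + sm ξ y
  add_smul : ∀ ξ η x, sm (ξ + η) x = sm ξ x + sm η x
  mul_smul : ∀ ξ η x, sm (ξ * η) x = sm ξ (sm η x)
  one_smul : ∀ x, sm 1 x = x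
  nrm_nonneg : ∀ x, 0 ≤ nrm x
  nrm_smul : ∀ ξ x, nrm (sm ξ x) = |ξ| * nrm x
  nrm_add : ∀ x y, nrm (x + y) ≤ nrm x + nrm y
  nrm_eq_zero : ∀ x, nrm x = 0 → x = 0

/-- `x` and `y` are `L⁰`-independent on `F`. -/
def Indep (sm : L0 μ → S → S) (x y : S) (F : Set Ω) : Prop :=
  ∀ ξ η : L0 μ, sm (ξ * ind μ F) x + sm (η * ind μ F) y = 0 →
    ξ * ind μ F = 0 ∧ η * ind μ F = 0

/-- `Rank_D(S) ≥ 2`. -/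
def RankGe2 (sm : L0 μ → S → S) (D : Set Ω) : Prop := ∃ x y : S, Indep sm x y D

/-- `A_x = [‖x‖ > 0]`. -/
def Aset (nrm : S → L0 μ) (x : S) : Set Ω := {ω | 0 < (nrm x) ω}

/-- `A_{xy} = A_x ∩ A_y`. -/
def Axy (nrm : S → L0 μ) (x y : S) : Set Ω := Aset nrm x ∩ Aset nrm y

/-- `B_{xy} = A_{xy} ∩ A_{x-y}`. -/
def Bxy (nrm : S → L0 μ) (x y : S) : Set Ω := Axy nrm x y ∩ Aset nrm (x - y)

/-- `H` is (a representative of) the support `H(S) = [⋁{‖x‖ : x ∈ S} > 0]`. -/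
def IsSupport (nrm : S → L0 μ) (H : Set Ω) : Prop :=
  MeasurableSet H ∧ (∀ x : S, aeSub μ (Aset nrm x) H) ∧
    ∀ B : Set Ω, MeasurableSet B → aeSub μ B H → 0 < μ B →
      ∃ x : S, 0 < μ (B ∩ Aset nrm x)

/-- A sequence in `S` is Cauchy for the topology of convergence in probability. -/
def CauchyInProb (μ : Measure Ω) (nrm : S → L0 μ) (u : ℕ → S) : Prop :=
  ∀ ε : ℝ, 0 < ε →
    Tendsto (fun p : ℕ × ℕ => μ {ω | ε ≤ |(nrm (u p.1 - u p.2)) ω|}) atTop (nhds 0)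

/-- `u n → x` in probability (i.e. `‖u n - x‖ → 0` in probability). -/
def TendstoInProb (μ : Measure Ω) (nrm : S → L0 μ) (u : ℕ → S) (x : S) : Prop :=
  ∀ ε : ℝ, 0 < ε →
    Tendsto (fun n => μ {ω | ε ≤ |(nrm (u n - x)) ω|}) atTop (nhds 0)

/-- Completeness of a random normed module. -/
def CompleteRN (μ : Measure Ω) (nrm : S → L0 μ) : Prop :=
  ∀ u : ℕ → S, CauchyInProb μ nrm u → ∃ x : S, TendstoInProb μ nrm u x

/-- The random unit sphere `S(1)`. -/
def sphere (nrm : S → L0 μ) : Set S :=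
  {x | ∃ A : Set Ω, MeasurableSet A ∧ 0 < μ A ∧ nrm x = ind μ A}

/-- The random closed unit ball `U(1)`. -/
def ball (nrm : S → L0 μ) : Set S := {x | nrm x ≤ 1}

/-- `ε` is an admissible random convexity parameter on `D`: `ε ≥ 0` and `0 < ε ≤ 2` on `D`. -/
def Admissible (μ : Measure Ω) (D : Set Ω) (ε : L0 μ) : Prop :=
  0 ≤ ε ∧ ∀ᵐ ω ∂μ, ω ∈ D → 0 < ε ω ∧ ε ω ≤ 2

/-- midpoint `(x+y)/2`. -/
def mid (μ : Measure Ω) (sm : L0 μ → S → S) (x y : S) : S := sm (cst μ (1/2)) (x + y)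

/-- The set whose infimum (in the a.s. order of `L⁰`) is the modulus of random
convexity `δ_D(ε)`. -/
def modSet (μ : Measure Ω) (sm : L0 μ → S → S) (nrm : S → L0 μ) (D : Set Ω) (ε : L0 μ) :
    Set (L0 μ) :=
  {z | ∃ x ∈ sphere nrm, ∃ y ∈ sphere nrm, aeSub μ D (Bxy nrm x y) ∧
    ε * ind μ D ≤ ind μ D * nrm (x - y) ∧
    z = ind μ D - ind μ D * nrm (mid μ sm x y)}

/-- `S` is random uniformly convex: `δ_{H(S)}(ε) > 0` on `H(S)` for every admissible `ε`. -/
def RandomUniformlyConvex (μ : Measure Ω) (sm : L0 μ → S → S) (nrm : S → L0 μ)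
    (H : Set Ω) : Prop :=
  ∀ ε : L0 μ, Admissible μ H ε → ∀ d : L0 μ, IsGLB (modSet μ sm nrm H ε) d →
    ∀ᵐ ω ∂μ, ω ∈ H → 0 < d ω

/-- `G` is (a representative of) `G(S)`. -/
def IsGSet (μ : Measure Ω) (sm : L0 μ → S → S) (H G : Set Ω) : Prop :=
  MeasurableSet G ∧ aeSub μ G H ∧ 0 < μ G ∧ RankGe2 sm G ∧
    ∀ D : Set Ω, MeasurableSet D → aeSub μ D (H \ G) → 0 < μ D → ¬ RankGe2 sm D


/-- Characterization of attainment on a compact interval via rationals. -/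
lemma exists_mem_Icc_le_iff {g : ℝ → ℝ} (hg : Continuous g) {c a : ℝ} (ha : 0 ≤ a) :
    (∃ t ∈ Icc (0:ℝ) a, c ≤ g t) ↔
      ∀ n : ℕ, ∃ q : ℚ, (q:ℝ) ∈ Icc (0:ℝ) a ∧ c - 1/(n+1) < g (q:ℝ) := by
  constructor
  · rintro ⟨t, ht, hct⟩ n
    have hn : (0:ℝ) < 1/(n+1) := by positivity
    rcases eq_or_lt_of_le ha with h0 | hapos
    · refine ⟨0, by simp [ha], ?_⟩
      have ht0 : t = 0 := le_antisymm (h0 ▸ ht.2) ht.1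
      subst ht0; push_cast; linarith
    · rcases eq_or_lt_of_le ht.1 with h0 | htpos
      · refine ⟨0, by simp [ha], ?_⟩
        rw [← h0] at hct; push_cast; linarith
      · -- t > 0 : pick rational slightly below t
        have hcont := Metric.continuous_iff.mp hg t (1/(n+1)) hn
        obtain ⟨δ, hδ, hball⟩ := hcont
        have hlt : max 0 (t - δ) < t := max_lt htpos (by linarith)
        obtain ⟨q, hq1, hq2⟩ := exists_rat_btwn hlt
        have hq0 : (0:ℝ) ≤ q := le_of_lt (lt_of_le_of_lt (le_max_left _ _) hq1)
        have hqa : (q:ℝ) ≤ a := le_trans hq2.le ht.2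
        have hdist : dist (q:ℝ) t < δ := by
          rw [Real.dist_eq, abs_sub_lt_iff]
          have h2 := lt_of_le_of_lt (le_max_right 0 (t - δ)) hq1
          constructor <;> linarith
        have hb := hball _ hdist
        rw [Real.dist_eq, abs_sub_lt_iff] at hb
        exact ⟨q, ⟨hq0, hqa⟩, by linarith [hb.2]⟩
  · intro h
    choose q hq hq2 using h
    obtain ⟨x, hx, φ, hφ, hlim⟩ :=
      (isCompact_Icc (a := (0:ℝ)) (b := a)).tendsto_subseq (fun n => hq n)
    refine ⟨x, hx, ?_⟩
    have h1 : Tendsto (fun k => g ((q (φ k) : ℝ))) atTop (nhds (g x)) :=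
      (hg.continuousAt.tendsto).comp hlim
    have h2 : Tendsto (fun k : ℕ => c - 1/((φ k) + 1 : ℝ)) atTop (nhds c) := by
      have : Tendsto (fun k : ℕ => ((φ k : ℝ) + 1)) atTop atTop :=
        tendsto_atTop_add_const_right _ 1 (tendsto_natCast_atTop_atTop.comp hφ.tendsto_atTop)
      simpa using (tendsto_const_nhds (x := c)).sub ((tendsto_const_nhds (x:=(1:ℝ))).div_atTop this)
    exact le_of_tendsto_of_tendsto h2 h1 (Eventually.of_forall fun k => (hq2 (φ k)).le)


/-- Measurable selection of the least point of `[0,r]` where a Carathéodory function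
exceeds a measurable threshold. -/
theorem leastRoot {Ω : Type*} [MeasurableSpace Ω] (E : Set Ω) (hE : MeasurableSet E)
    (g : ℝ → Ω → ℝ) (c : Ω → ℝ) (r : ℝ) (hr : 0 ≤ r)
    (hcont : ∀ ω ∈ E, Continuous fun t => g t ω)
    (hmeas : ∀ q : ℚ, Measurable (g q)) (hc : Measurable c)
    (hex : ∀ ω ∈ E, ∃ t ∈ Icc (0:ℝ) r, c ω ≤ g t ω) :
    ∃ τ : Ω → ℝ, Measurable τ ∧ ∀ ω ∈ E,
      τ ω ∈ Icc (0:ℝ) r ∧ c ω ≤ g (τ ω) ω ∧ ∀ t ∈ Ico (0:ℝ) (τ ω), g t ω < c ω := by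
  classical
  set τ0 : Ω → ℝ := fun ω => sInf {t | t ∈ Icc (0:ℝ) r ∧ c ω ≤ g t ω} with hτ0
  set τ : Ω → ℝ := fun ω => if ω ∈ E then τ0 ω else 0 with hτ
  -- basic facts about the set S ω for ω ∈ E
  have hS : ∀ ω ∈ E, τ0 ω ∈ {t | t ∈ Icc (0:ℝ) r ∧ c ω ≤ g t ω} := by
    intro ω hω
    have hcl : IsClosed {t | t ∈ Icc (0:ℝ) r ∧ c ω ≤ g t ω} := by
      have : {t | t ∈ Icc (0:ℝ) r ∧ c ω ≤ g t ω}
          = Icc (0:ℝ) r ∩ (fun t => g t ω) ⁻¹' Ici (c ω) := by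
        ext t
        constructor
        · rintro ⟨h1, h2⟩; exact ⟨h1, h2⟩
        · rintro ⟨h1, h2⟩; exact ⟨h1, h2⟩
      rw [this]
      exact isClosed_Icc.inter (isClosed_Ici.preimage (hcont ω hω))
    have hne : {t | t ∈ Icc (0:ℝ) r ∧ c ω ≤ g t ω}.Nonempty := by
      obtain ⟨t, ht, hct⟩ := hex ω hω; exact ⟨t, ht, hct⟩
    have hbdd : BddBelow {t | t ∈ Icc (0:ℝ) r ∧ c ω ≤ g t ω} :=
      ⟨0, fun t ht => ht.1.1⟩
    exact hcl.csInf_mem hne hbdd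
  refine ⟨τ, ?_, ?_⟩
  · -- measurability
    apply measurable_of_Iio
    intro s
    have key : τ ⁻¹' Iio s =
        ((if (0:ℝ) < s then Eᶜ else (∅ : Set Ω)) ∪ (E ∩
          ⋃ (s' : ℚ) (_ : 0 ≤ s' ∧ (s':ℝ) < s),
            ⋂ (n : ℕ), ⋃ (q : ℚ) (_ : (q:ℝ) ∈ Icc (0:ℝ) (min (s':ℝ) r)),
              {ω | c ω - 1/(n+1) < g (q:ℝ) ω})) := by
      ext ω
      simp only [mem_preimage, mem_Iio, mem_union, mem_inter_iff, mem_iUnion, mem_iInter,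
        mem_setOf_eq, exists_prop]
      by_cases hω : ω ∈ E
      · have hτω : τ ω = τ0 ω := by simp [hτ, hω]
        rw [hτω]
        constructor
        · intro hlt
          right
          refine ⟨hω, ?_⟩
          have hmem := hS ω hω
          obtain ⟨s', hs1', hs2'⟩ := exists_rat_btwn hlt
          have h0s' : (0:ℝ) ≤ (s':ℝ) := le_trans (hmem.1.1) hs1'.le
          refine ⟨s', ⟨by exact_mod_cast h0s', hs2'⟩, ?_⟩
          exact (exists_mem_Icc_le_iff (g := fun t => g t ω) (hcont ω hω)
            (c := c ω) (a := min (s':ℝ) r) (le_min h0s' hr)).mp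
            ⟨τ0 ω, ⟨hmem.1.1, le_min hs1'.le hmem.1.2⟩, hmem.2⟩
        · rintro (h | ⟨-, s', ⟨hs0', hs1'⟩, hall⟩)
          · exfalso; revert h; split
            · intro h; exact h hω
            · intro h; exact h
          · obtain ⟨t, ht, hct⟩ := (exists_mem_Icc_le_iff (g := fun t => g t ω)
              (hcont ω hω) (c := c ω) (a := min (s':ℝ) r)
              (le_min (by exact_mod_cast hs0') hr)).mpr (fun n => hall n)
            have : τ0 ω ≤ t := csInf_le ⟨0, fun u hu => hu.1.1⟩
              ⟨⟨ht.1, le_trans ht.2 (min_le_right _ _)⟩, hct⟩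
            exact lt_of_le_of_lt this (lt_of_le_of_lt (le_trans ht.2 (min_le_left _ _)) hs1')
      · have hτω : τ ω = 0 := by simp [hτ, hω]
        rw [hτω]
        constructor
        · intro h0s
          left; split
          · exact hω
          · exact absurd h0s (by assumption)
        · rintro (h | ⟨hωE, -⟩)
          · revert h; split
            · intro _; assumption
            · intro h; exact absurd h (notMem_empty ω)
          · exact absurd hωE hω
    rw [key]
    apply MeasurableSet.union
    · split
      · exact hE.compl
      · exact MeasurableSet.empty
    · refine hE.inter ?_
      refine MeasurableSet.iUnion fun s' => MeasurableSet.iUnion fun _ => ?_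
      refine MeasurableSet.iInter fun n => ?_
      refine MeasurableSet.iUnion fun q => MeasurableSet.iUnion fun _ => ?_
      exact measurableSet_lt (hc.sub measurable_const) (hmeas q)
  · intro ω hω
    have hmem := hS ω hω
    have hτω : τ ω = τ0 ω := by simp [hτ, hω]
    rw [hτω]
    refine ⟨hmem.1, hmem.2, ?_⟩
    intro t ht
    by_contra hcon
    push_neg at hcon
    have : τ0 ω ≤ t := csInf_le ⟨0, fun u hu => hu.1.1⟩
      ⟨⟨ht.1, le_trans ht.2.le hmem.1.2⟩, hcon⟩
    exact absurd ht.2 (not_lt.mpr this)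



/-- Piecewise-linear path tracing the upper half of the `ℓ∞` unit circle from `(1,0)` to
`(-1,0)`. -/
noncomputable def hcp (t : ℝ) : ℝ × ℝ :=
  if t ≤ 1 then (1, t) else if t ≤ 2 then (3 - 2*t, 1) else (-1, 3 - t)

lemma hcp_cont : Continuous hcp := by
  unfold hcp
  apply Continuous.if_le
  · exact continuous_const.prodMk continuous_id
  · apply Continuous.if_le
    · exact (continuous_const.sub (continuous_const.mul continuous_id)).prodMk continuous_const
    · exact continuous_const.prodMk (continuous_const.sub continuous_id)
    · exact continuous_id
    · exact continuous_const
    · intro x hx; rw [hx]; norm_num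
  · exact continuous_id
  · exact continuous_const
  · intro x hx
    rw [hx]
    norm_num

lemma hcp_ne (t : ℝ) : hcp t ≠ 0 := by
  unfold hcp
  split
  · intro h; have := congrArg Prod.fst h; simp at this
  · split
    · intro h; have := congrArg Prod.snd h; simp at this
    · intro h; have := congrArg Prod.fst h; simp at this
    
lemma hcp_zero : hcp 0 = (1, 0) := by norm_num [hcp]

lemma hcp_three : hcp 3 = (-1, 0) := by norm_num [hcp]

/-- Every nonzero vector of the plane is a nonzero multiple of some point on the path. -/
lemma hcp_cover (x : ℝ × ℝ) (hx : x ≠ 0) :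
    ∃ t ∈ Icc (0:ℝ) 3, ∃ c : ℝ, c ≠ 0 ∧ x = c • hcp t := by
  rcases le_or_gt (|x.1|) (|x.2|) with h | h
  · -- second coordinate dominates: use the top edge  t = (3 - x.1/x.2)/2 ∈ [1,2]
    have hx2 : x.2 ≠ 0 := by
      intro h2
      apply hx
      have h1 : x.1 = 0 := by rw [h2] at h; simpa using abs_nonpos_iff.mp (by simpa [h2] using h)
      exact Prod.ext h1 h2
    have hratio : |x.1 / x.2| ≤ 1 := by
      rw [abs_div]
      rw [div_le_one (abs_pos.mpr hx2)]
      exact h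
    rw [abs_le] at hratio
    set t := (3 - x.1/x.2)/2 with htdef
    have ht1 : 1 ≤ t := by rw [htdef]; linarith [hratio.2]
    have ht2 : t ≤ 2 := by rw [htdef]; linarith [hratio.1]
    refine ⟨t, ⟨by linarith, by linarith⟩, x.2, hx2, ?_⟩
    rcases eq_or_lt_of_le ht1 with he | hlt
    · have hle : t ≤ 1 := he.symm.le
      rw [hcp, if_pos hle]
      have hx1 : x.1 = x.2 := by
        have hq : x.1 / x.2 = 1 := by rw [htdef] at he; field_simp at he; linarith
        field_simp at hq; linarith
      rw [← he]
      simp [Prod.ext_iff, hx1]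
    · rw [hcp, if_neg (not_le.mpr hlt), if_pos ht2]
      have : 3 - 2*t = x.1/x.2 := by rw [htdef]; ring
      rw [this]
      ext <;> simp
      · field_simp
  · -- first coordinate dominates (strictly)
    have hx1 : x.1 ≠ 0 := by
      intro h1
      rw [h1] at h; simp at h; exact absurd (abs_nonneg x.2) (not_le.mpr h)
    have hratio : |x.2 / x.1| < 1 := by
      rw [abs_div, div_lt_one (abs_pos.mpr hx1)]; exact h
    rw [abs_lt] at hratio
    rcases le_or_gt 0 (x.2 / x.1) with hs | hs
    · -- use the first edge: t = x.2/x.1 ∈ [0,1]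
      refine ⟨x.2/x.1, ⟨hs, by linarith [hratio.2]⟩, x.1, hx1, ?_⟩
      rw [hcp, if_pos (by linarith [hratio.2] : x.2/x.1 ≤ 1)]
      ext <;> simp
      field_simp
    · -- use the third edge: t = 3 + x.2/x.1 ∈ (2,3]
      refine ⟨3 + x.2/x.1, ⟨by linarith [hratio.1], by linarith⟩, -x.1, neg_ne_zero.mpr hx1, ?_⟩
      rw [hcp, if_neg (by push_neg; linarith [hratio.1]), if_neg (by push_neg; linarith [hratio.1])]
      ext <;> simp
      · field_simp



section Toolkit

variable {μ : Measure Ω} {S : Type*} [AddCommGroup S]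
variable {sm : L0 μ → S → S} {nrm : S → L0 μ}

lemma coeFn_ind {A : Set Ω} (hA : MeasurableSet A) :
    ⇑(ind μ A) =ᵐ[μ] A.indicator (fun _ => (1:ℝ)) := by
  rw [ind, dif_pos hA]
  exact AEEqFun.coeFn_mk _ _

lemma smul_zero' (hRN : IsRNModule μ sm nrm) (ξ : L0 μ) : sm ξ (0 : S) = 0 := by
  have h := hRN.smul_add ξ 0 0
  rw [add_zero] at h
  exact (left_eq_add.mp h)

lemma abs_zero' : |(0 : L0 μ)| = 0 := by
  apply AEEqFun.ext
  filter_upwards [AEEqFun.coeFn_abs (0 : L0 μ), AEEqFun.coeFn_zero (μ := μ) (β := ℝ)]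
    with ω h1 h2
  simp [h1, h2]

lemma L0_zero_mul (ξ : L0 μ) : (0 : L0 μ) * ξ = 0 := by
  apply AEEqFun.ext
  filter_upwards [AEEqFun.coeFn_mul (0 : L0 μ) ξ, AEEqFun.coeFn_zero (μ := μ) (β := ℝ)]
    with ω h1 h2
  simp [h1, h2]

lemma zero_smul' (hRN : IsRNModule μ sm nrm) (x : S) : sm 0 x = 0 := by
  apply hRN.nrm_eq_zero
  rw [hRN.nrm_smul, abs_zero', L0_zero_mul]

lemma nrm_zero' (hRN : IsRNModule μ sm nrm) : nrm (0 : S) = 0 := by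
  have := hRN.nrm_smul 0 (0 : S)
  rw [zero_smul' hRN, abs_zero', L0_zero_mul] at this
  exact this

lemma neg_smul' (hRN : IsRNModule μ sm nrm) (ξ : L0 μ) (x : S) : sm (-ξ) x = -(sm ξ x) := by
  have h := hRN.add_smul ξ (-ξ) x
  rw [add_neg_cancel, zero_smul' hRN] at h
  exact (neg_eq_of_add_eq_zero_right h.symm).symm

lemma sub_smul' (hRN : IsRNModule μ sm nrm) (ξ η : L0 μ) (x : S) :
    sm (ξ - η) x = sm ξ x - sm η x := by
  rw [sub_eq_add_neg, hRN.add_smul, neg_smul' hRN, sub_eq_add_neg]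

lemma nrm_ind_smul (hRN : IsRNModule μ sm nrm) {A : Set Ω} (hA : MeasurableSet A) (x : S) :
    nrm (sm (ind μ A) x) = ind μ A * nrm x := by
  rw [hRN.nrm_smul]
  congr 1
  apply AEEqFun.ext
  filter_upwards [AEEqFun.coeFn_abs (ind μ A), coeFn_ind hA] with ω h1 h2
  rw [h1, h2, abs_of_nonneg]
  exact Set.indicator_nonneg (fun _ _ => zero_le_one) ω

lemma ind_mul_ind {A B : Set Ω} (hA : MeasurableSet A) (hB : MeasurableSet B) :
    ind μ A * ind μ B = ind μ (A ∩ B) := by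
  apply AEEqFun.ext
  filter_upwards [AEEqFun.coeFn_mul (ind μ A) (ind μ B), coeFn_ind hA, coeFn_ind hB,
    coeFn_ind (hA.inter hB)] with ω h0 h1 h2 h3
  rw [h0, Pi.mul_apply, h1, h2, h3]
  by_cases hωA : ω ∈ A <;> by_cases hωB : ω ∈ B <;>
    simp [Set.indicator_apply, hωA, hωB]

lemma coeFn_combo (x y z w r : L0 μ) :
    ⇑(x + (|y| * w + |z| * r)) =ᵐ[μ] fun ω => x ω + (|y ω| * w ω + |z ω| * r ω) := by
  filter_upwards [AEEqFun.coeFn_add x (|y| * w + |z| * r), AEEqFun.coeFn_add (|y| * w) (|z| * r),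
    AEEqFun.coeFn_mul (|y|) w, AEEqFun.coeFn_mul (|z|) r, AEEqFun.coeFn_abs y,
    AEEqFun.coeFn_abs z] with ω e1 e2 e3 e4 e5 e6
  rw [e1, Pi.add_apply, e2, Pi.add_apply, e3, e4, Pi.mul_apply, Pi.mul_apply, e5, e6]

lemma L0_add_le_add {a b c d : L0 μ} (h1 : a ≤ b) (h2 : c ≤ d) : a + c ≤ b + d := by
  rw [← AEEqFun.coeFn_le] at h1 h2 ⊢
  filter_upwards [h1, h2, AEEqFun.coeFn_add a c, AEEqFun.coeFn_add b d] with ω h1 h2 h3 h4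
  rw [h3, h4]
  exact add_le_add h1 h2

end Toolkit


set_option maxHeartbeats 3200000 in
/-- **Lemma 3.3.** `δ_{G(S)}(ε) ≤ (ε/2) I_{G(S)}` for every admissible `ε` on `G(S)`. -/
theorem modulus_le_half_eps {Ω : Type*} [MeasurableSpace Ω] (μ : Measure Ω)
    [IsProbabilityMeasure μ] {S : Type*} [AddCommGroup S]
    (sm : L0 μ → S → S) (nrm : S → L0 μ) (hRN : IsRNModule μ sm nrm)
    (hcomp : CompleteRN μ nrm) (H : Set Ω) (hH : IsSupport nrm H)
    (G : Set Ω) (hG : IsGSet μ sm H G)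
    (ε : L0 μ) (hε : Admissible μ G ε) :
    ∀ d : L0 μ, IsGLB (modSet μ sm nrm G ε) d → d ≤ cst μ (1 / 2) * ε * ind μ G := by
  classical
  intro d hd
  obtain ⟨hGm, hGH, hGpos, ⟨u, v, huv⟩, hmax⟩ := hG
  -- Step 1: independence with random coefficients supported in a subset of G
  have indep_vanish : ∀ D : Set Ω, MeasurableSet D → D ⊆ G → ∀ γ₁ γ₂ : L0 μ,
      sm (γ₁ * ind μ D) u + sm (γ₂ * ind μ D) v = 0 →
      γ₁ * ind μ D = 0 ∧ γ₂ * ind μ D = 0 := by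
    intro D hD hDG γ₁ γ₂ hzero
    have e1 : (γ₁ * ind μ D) * ind μ G = γ₁ * ind μ D := by
      rw [mul_assoc, ind_mul_ind hD hGm, Set.inter_eq_left.mpr hDG]
    have e2 : (γ₂ * ind μ D) * ind μ G = γ₂ * ind μ D := by
      rw [mul_assoc, ind_mul_ind hD hGm, Set.inter_eq_left.mpr hDG]
    have h := huv (γ₁ * ind μ D) (γ₂ * ind μ D) (by rw [e1, e2]; exact hzero)
    rw [e1, e2] at h
    exact h
  -- Step 2: the combined norm functional and its L⁰ properties
  set T : L0 μ → L0 μ → L0 μ := fun ξ η => nrm (sm ξ u + sm η v) with hT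
  have T_le : ∀ ξ η ξ' η' : L0 μ,
      T ξ η ≤ T ξ' η' + (|ξ - ξ'| * nrm u + |η - η'| * nrm v) := by
    intro ξ η ξ' η'
    have key : sm ξ u + sm η v = (sm ξ' u + sm η' v) + (sm (ξ - ξ') u + sm (η - η') v) := by
      rw [sub_smul' hRN, sub_smul' hRN]
      abel
    simp only [hT]
    rw [key]
    refine le_trans (hRN.nrm_add _ _) ?_
    refine L0_add_le_add (le_refl _) ?_
    refine le_trans (hRN.nrm_add _ _) ?_
    rw [hRN.nrm_smul, hRN.nrm_smul]
  have T_smul : ∀ ζ ξ η : L0 μ, T (ζ * ξ) (ζ * η) = |ζ| * T ξ η := by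
    intro ζ ξ η
    simp only [hT]
    rw [hRN.mul_smul, hRN.mul_smul, ← hRN.smul_add, hRN.nrm_smul]
  -- Step 3: a jointly well-behaved representative of the fiberwise norm
  set Cf : Ω → ℝ := fun ω => |(nrm u) ω| + |(nrm v) ω| with hCf
  have hCf_meas : Measurable Cf := ((nrm u).measurable.abs).add ((nrm v).measurable.abs)
  have hCf0 : ∀ ω, 0 ≤ Cf ω := fun ω => add_nonneg (abs_nonneg _) (abs_nonneg _)
  set gq : ℚ × ℚ → Ω → ℝ := fun p ω => max ((T (cst μ p.1) (cst μ p.2)) ω) 0 with hgq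
  have hgq_meas : ∀ p, Measurable (gq p) := fun p => ((T _ _).measurable.max measurable_const)
  have hgq0 : ∀ p ω, 0 ≤ gq p ω := fun p ω => le_max_right _ _
  set f : ℝ → ℝ → Ω → ℝ :=
    fun α β ω => ⨅ p : ℚ × ℚ, (gq p ω + (|α - (p.1:ℝ)| + |β - (p.2:ℝ)|) * Cf ω) with hf
  have hfBdd : ∀ α β ω, BddBelow (Set.range fun p : ℚ × ℚ =>
      gq p ω + (|α - (p.1:ℝ)| + |β - (p.2:ℝ)|) * Cf ω) := by
    intro α β ω
    refine ⟨0, ?_⟩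
    rintro y ⟨p, rfl⟩
    exact add_nonneg (hgq0 p ω) (mul_nonneg (by positivity) (hCf0 ω))
  have hf_le : ∀ α β ω (p : ℚ × ℚ),
      f α β ω ≤ gq p ω + (|α - (p.1:ℝ)| + |β - (p.2:ℝ)|) * Cf ω :=
    fun α β ω p => ciInf_le (hfBdd α β ω) p
  have hf0 : ∀ α β ω, 0 ≤ f α β ω := fun α β ω =>
    le_ciInf fun p => add_nonneg (hgq0 p ω) (mul_nonneg (by positivity) (hCf0 ω))
  have hf_lip : ∀ α β α' β' ω,
      f α β ω ≤ f α' β' ω + (|α - α'| + |β - β'|) * Cf ω := by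
    intro α β α' β' ω
    rw [← sub_le_iff_le_add]
    simp only [hf]
    refine le_ciInf fun p => ?_
    rw [sub_le_iff_le_add]
    refine le_trans (hf_le α β ω p) ?_
    have habs : |α - (p.1:ℝ)| + |β - (p.2:ℝ)| ≤
        (|α' - (p.1:ℝ)| + |β' - (p.2:ℝ)|) + (|α - α'| + |β - β'|) := by
      have h1 := abs_sub_le α α' (p.1:ℝ)
      have h2 := abs_sub_le β β' (p.2:ℝ)
      linarith
    have hm := mul_le_mul_of_nonneg_right habs (hCf0 ω)
    rw [add_mul] at hm
    linarith
  have hf_cont : ∀ ω, Continuous (fun pq : ℝ × ℝ => f pq.1 pq.2 ω) := by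
    intro ω
    have hL : LipschitzWith (Real.toNNReal (2 * Cf ω)) (fun pq : ℝ × ℝ => f pq.1 pq.2 ω) := by
      refine LipschitzWith.of_dist_le_mul fun p q => ?_
      have hco : ((Real.toNNReal (2 * Cf ω) : NNReal) : ℝ) = 2 * Cf ω :=
        Real.coe_toNNReal _ (mul_nonneg (by norm_num) (hCf0 ω))
      rw [Real.dist_eq, hco]
      have hd1 : |p.1 - q.1| ≤ dist p q := by
        rw [Prod.dist_eq, ← Real.dist_eq]
        exact le_max_left _ _
      have hd2 : |p.2 - q.2| ≤ dist p q := by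
        rw [Prod.dist_eq, ← Real.dist_eq]
        exact le_max_right _ _
      have h1 := hf_lip p.1 p.2 q.1 q.2 ω
      have h2 := hf_lip q.1 q.2 p.1 p.2 ω
      have hm1 := mul_le_mul_of_nonneg_right (add_le_add hd1 hd2) (hCf0 ω)
      have hd1' : |q.1 - p.1| ≤ dist p q := by rw [abs_sub_comm]; exact hd1
      have hd2' : |q.2 - p.2| ≤ dist p q := by rw [abs_sub_comm]; exact hd2
      have hm2 := mul_le_mul_of_nonneg_right (add_le_add hd1' hd2') (hCf0 ω)
      rw [abs_sub_le_iff]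
      constructor <;> nlinarith [hCf0 ω]
    exact hL.continuous
  have hf_meas : ∀ (a b : Ω → ℝ), Measurable a → Measurable b →
      Measurable (fun ω => f (a ω) (b ω) ω) := by
    intro a b ha hb
    simp only [hf]
    refine Measurable.iInf fun p => ?_
    exact Measurable.add (hgq_meas p) (Measurable.mul
      (((ha.sub measurable_const).abs).add ((hb.sub measurable_const).abs)) hCf_meas)
  -- Step 4: the good set E
  set P : Ω → Prop := fun ω =>
      (∀ p : ℚ × ℚ, gq p ω = (T (cst μ p.1) (cst μ p.2)) ω) ∧
      (∀ p q : ℚ × ℚ, (T (cst μ p.1) (cst μ p.2)) ω ≤ (T (cst μ q.1) (cst μ q.2)) ω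
        + (|(p.1:ℝ) - (q.1:ℝ)| + |(p.2:ℝ) - (q.2:ℝ)|) * Cf ω) ∧
      (∀ c : ℚ, ∀ p : ℚ × ℚ, (T (cst μ (c*p.1)) (cst μ (c*p.2))) ω
        = |(c:ℝ)| * (T (cst μ p.1) (cst μ p.2)) ω) ∧
      ((T (cst μ 0) (cst μ 0)) ω = 0) ∧
      (ω ∈ G → 0 < ε ω ∧ ε ω ≤ 2) with hPdef
  have cst_coe : ∀ r : ℝ, ⇑(cst μ r) =ᵐ[μ] fun _ => r := by
    intro r
    have := AEEqFun.coeFn_const (α := Ω) (μ := μ) r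
    exact this
  have hcst_mul : ∀ a b : ℝ, cst μ a * cst μ b = cst μ (a * b) := by
    intro a b
    apply AEEqFun.ext
    filter_upwards [AEEqFun.coeFn_mul (cst μ a) (cst μ b), cst_coe a, cst_coe b,
      cst_coe (a * b)] with ω h1 h2 h3 h4
    rw [h1, h4, Pi.mul_apply, h2, h3]
  have cst_zero : cst μ 0 = (0 : L0 μ) := by
    apply AEEqFun.ext
    filter_upwards [cst_coe 0, AEEqFun.coeFn_zero (μ := μ) (β := ℝ)] with ω h1 h2
    rw [h1, h2]
    rfl
  have hgood : ∀ᵐ ω ∂μ, P ω := by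
    have h1 : ∀ᵐ ω ∂μ, ∀ p : ℚ × ℚ, gq p ω = (T (cst μ p.1) (cst μ p.2)) ω := by
      rw [MeasureTheory.ae_all_iff]
      intro p
      have h0 : (0 : L0 μ) ≤ T (cst μ p.1) (cst μ p.2) := hRN.nrm_nonneg _
      rw [← AEEqFun.coeFn_le] at h0
      filter_upwards [h0, AEEqFun.coeFn_zero (μ := μ) (β := ℝ)] with ω hω h2
      simp only [hgq]
      rw [h2] at hω
      exact max_eq_left hω
    have h2 : ∀ᵐ ω ∂μ, ∀ p q : ℚ × ℚ, (T (cst μ p.1) (cst μ p.2)) ω ≤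
        (T (cst μ q.1) (cst μ q.2)) ω
        + (|(p.1:ℝ) - (q.1:ℝ)| + |(p.2:ℝ) - (q.2:ℝ)|) * Cf ω := by
      rw [MeasureTheory.ae_all_iff]
      intro p
      rw [MeasureTheory.ae_all_iff]
      intro q
      have hle := T_le (cst μ p.1) (cst μ p.2) (cst μ q.1) (cst μ q.2)
      rw [← AEEqFun.coeFn_le] at hle
      set A := |cst μ (p.1:ℝ) - cst μ (q.1:ℝ)| with hA
      set B := |cst μ (p.2:ℝ) - cst μ (q.2:ℝ)| with hB
      filter_upwards [hle,
        AEEqFun.coeFn_add (T (cst μ q.1) (cst μ q.2)) (A * nrm u + B * nrm v),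
        AEEqFun.coeFn_add (A * nrm u) (B * nrm v),
        AEEqFun.coeFn_mul A (nrm u), AEEqFun.coeFn_mul B (nrm v),
        AEEqFun.coeFn_abs (cst μ (p.1:ℝ) - cst μ (q.1:ℝ)),
        AEEqFun.coeFn_abs (cst μ (p.2:ℝ) - cst μ (q.2:ℝ)),
        AEEqFun.coeFn_sub (cst μ (p.1:ℝ)) (cst μ (q.1:ℝ)),
        AEEqFun.coeFn_sub (cst μ (p.2:ℝ)) (cst μ (q.2:ℝ)),
        cst_coe (p.1:ℝ), cst_coe (q.1:ℝ), cst_coe (p.2:ℝ), cst_coe (q.2:ℝ)] with ω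
        e1 e2 e3 e4 e5 e6 e7 e8 e9 c1 c2 c3 c4
      rw [e2] at e1
      rw [Pi.add_apply] at e1
      rw [e3] at e1
      rw [Pi.add_apply] at e1
      rw [e4, e5] at e1
      rw [Pi.mul_apply, Pi.mul_apply] at e1
      rw [← hA] at e6
      rw [← hB] at e7
      rw [e6, e7] at e1
      rw [Pi.sub_apply] at e8 e9
      rw [e8, e9, c1, c2, c3, c4] at e1
      refine le_trans e1 ?_
      simp only [hCf]
      have hu1 : (nrm u) ω ≤ |(nrm u) ω| := le_abs_self _
      have hv1 : (nrm v) ω ≤ |(nrm v) ω| := le_abs_self _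
      have ha1 : (0:ℝ) ≤ |(p.1:ℝ) - (q.1:ℝ)| := abs_nonneg _
      have ha2 : (0:ℝ) ≤ |(p.2:ℝ) - (q.2:ℝ)| := abs_nonneg _
      nlinarith [abs_nonneg ((nrm u) ω), abs_nonneg ((nrm v) ω)]
    have h3 : ∀ᵐ ω ∂μ, ∀ c : ℚ, ∀ p : ℚ × ℚ, (T (cst μ (c*p.1)) (cst μ (c*p.2))) ω
        = |(c:ℝ)| * (T (cst μ p.1) (cst μ p.2)) ω := by
      rw [MeasureTheory.ae_all_iff]
      intro c
      rw [MeasureTheory.ae_all_iff]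
      intro p
      have heq : T (cst μ ((c:ℝ)*(p.1:ℝ))) (cst μ ((c:ℝ)*(p.2:ℝ)))
          = |cst μ (c:ℝ)| * T (cst μ p.1) (cst μ p.2) := by
        rw [← hcst_mul, ← hcst_mul]
        exact T_smul (cst μ (c:ℝ)) (cst μ (p.1:ℝ)) (cst μ (p.2:ℝ))
      rw [heq]
      filter_upwards [AEEqFun.coeFn_mul (|cst μ (c:ℝ)|) (T (cst μ p.1) (cst μ p.2)),
        AEEqFun.coeFn_abs (cst μ (c:ℝ)), cst_coe (c:ℝ)] with ω e1 e2 e3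
      rw [e1, Pi.mul_apply, e2, e3]
    have h4 : ∀ᵐ ω ∂μ, (T (cst μ 0) (cst μ 0)) ω = 0 := by
      have hz : T (cst μ 0) (cst μ 0) = 0 := by
        rw [cst_zero]
        simp only [hT]
        rw [zero_smul' hRN, zero_smul' hRN, add_zero, nrm_zero' hRN]
      rw [hz]
      filter_upwards [AEEqFun.coeFn_zero (μ := μ) (β := ℝ)] with ω e1
      rw [e1]
      rfl
    filter_upwards [h1, h2, h3, h4, hε.2] with ω e1 e2 e3 e4 e5
    exact ⟨e1, e2, e3, e4, e5⟩
  obtain ⟨E, hEm, hEnull, hEgood⟩ : ∃ E : Set Ω, MeasurableSet E ∧ μ Eᶜ = 0 ∧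
      ∀ ω ∈ E, P ω := by
    refine ⟨(toMeasurable μ {ω | ¬ P ω})ᶜ, (measurableSet_toMeasurable _ _).compl, ?_, ?_⟩
    · rw [compl_compl, measure_toMeasurable]
      simpa [MeasureTheory.ae_iff] using hgood
    · intro ω hω
      by_contra hcon
      exact hω (subset_toMeasurable _ _ hcon)
  have hEae : ∀ᵐ ω ∂μ, ω ∈ E := by
    rw [MeasureTheory.ae_iff]
    exact hEnull
  have hfgq : ∀ ω ∈ E, ∀ p : ℚ × ℚ, f (p.1:ℝ) (p.2:ℝ) ω = gq p ω := by
    intro ω hω p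
    obtain ⟨e1, e2, -, -, -⟩ := hEgood ω hω
    refine le_antisymm ?_ ?_
    · have := hf_le (p.1:ℝ) (p.2:ℝ) ω p
      simpa using this
    · simp only [hf]
      refine le_ciInf fun q => ?_
      rw [e1 p, e1 q]
      exact e2 p q
  have hf00 : ∀ ω ∈ E, f 0 0 ω = 0 := by
    intro ω hω
    obtain ⟨e1, -, -, e4, -⟩ := hEgood ω hω
    have h := hfgq ω hω (0, 0)
    simp only [Rat.cast_zero] at h
    rw [h, e1 (0, 0)]
    simp only [Rat.cast_zero]
    exact e4
  have hfhom : ∀ ω ∈ E, ∀ (c x1 x2 : ℝ), f (c*x1) (c*x2) ω = |c| * f x1 x2 ω := by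
    intro ω hω
    obtain ⟨e1, -, e3, -, -⟩ := hEgood ω hω
    have hmap : Continuous fun cx : ℝ × ℝ × ℝ => (cx.1 * cx.2.1, cx.1 * cx.2.2) :=
      (continuous_fst.mul (continuous_fst.comp continuous_snd)).prodMk
        (continuous_fst.mul (continuous_snd.comp continuous_snd))
    have hcont1 : Continuous fun cx : ℝ × ℝ × ℝ => f (cx.1 * cx.2.1) (cx.1 * cx.2.2) ω :=
      (hf_cont ω).comp hmap
    have hcont2 : Continuous fun cx : ℝ × ℝ × ℝ => |cx.1| * f cx.2.1 cx.2.2 ω :=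
      (continuous_abs.comp continuous_fst).mul ((hf_cont ω).comp continuous_snd)
    have hdense : DenseRange (fun q : ℚ × ℚ × ℚ =>
        ((q.1:ℝ), ((q.2.1:ℝ), (q.2.2:ℝ)))) :=
      DenseRange.prodMap Rat.denseRange_cast
        (DenseRange.prodMap Rat.denseRange_cast Rat.denseRange_cast)
    have heq : (fun cx : ℝ × ℝ × ℝ => f (cx.1 * cx.2.1) (cx.1 * cx.2.2) ω)
        = fun cx : ℝ × ℝ × ℝ => |cx.1| * f cx.2.1 cx.2.2 ω := by
      refine Continuous.ext_on hdense hcont1 hcont2 ?_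
      rintro x ⟨q, rfl⟩
      obtain ⟨c, q1, q2⟩ := q
      simp only
      have hc1 : (c:ℝ) * (q1:ℝ) = ((c*q1 : ℚ) : ℝ) := by push_cast; ring
      have hc2 : (c:ℝ) * (q2:ℝ) = ((c*q2 : ℚ) : ℝ) := by push_cast; ring
      rw [hc1, hc2, hfgq ω hω (c*q1, c*q2), hfgq ω hω (q1, q2)]
      rw [e1 (c*q1, c*q2), e1 (q1, q2)]
      push_cast
      exact e3 c (q1, q2)
    intro c x1 x2
    exact congrFun heq (c, x1, x2)
  -- Step 5: the substitution lemma
  have subst : ∀ ξ η : L0 μ,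
      ⇑(nrm (sm ξ u + sm η v)) =ᵐ[μ] fun ω => f (ξ ω) (η ω) ω := by
    intro ξ η
    have hnu0 : ∀ᵐ ω ∂μ, 0 ≤ (nrm u) ω := by
      have h0 : (0 : L0 μ) ≤ nrm u := hRN.nrm_nonneg u
      rw [← AEEqFun.coeFn_le] at h0
      filter_upwards [h0, AEEqFun.coeFn_zero (μ := μ) (β := ℝ)] with ω e1 e2
      rw [e2] at e1
      exact e1
    have hnv0 : ∀ᵐ ω ∂μ, 0 ≤ (nrm v) ω := by
      have h0 : (0 : L0 μ) ≤ nrm v := hRN.nrm_nonneg v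
      rw [← AEEqFun.coeFn_le] at h0
      filter_upwards [h0, AEEqFun.coeFn_zero (μ := μ) (β := ℝ)] with ω e1 e2
      rw [e2] at e1
      exact e1
    have key : ∀ᵐ ω ∂μ, ∀ p : ℚ × ℚ,
        |(T ξ η) ω - (T (cst μ p.1) (cst μ p.2)) ω| ≤
          (|ξ ω - (p.1:ℝ)| + |η ω - (p.2:ℝ)|) * Cf ω := by
      rw [MeasureTheory.ae_all_iff]
      intro p
      have hle1 := T_le ξ η (cst μ p.1) (cst μ p.2)
      have hle2 := T_le (cst μ p.1) (cst μ p.2) ξ η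
      rw [← AEEqFun.coeFn_le] at hle1 hle2
      filter_upwards [hle1, hle2,
        coeFn_combo (T (cst μ p.1) (cst μ p.2)) (ξ - cst μ (p.1:ℝ)) (η - cst μ (p.2:ℝ))
          (nrm u) (nrm v),
        coeFn_combo (T ξ η) (cst μ (p.1:ℝ) - ξ) (cst μ (p.2:ℝ) - η) (nrm u) (nrm v),
        AEEqFun.coeFn_sub ξ (cst μ (p.1:ℝ)), AEEqFun.coeFn_sub (cst μ (p.1:ℝ)) ξ,
        AEEqFun.coeFn_sub η (cst μ (p.2:ℝ)), AEEqFun.coeFn_sub (cst μ (p.2:ℝ)) η,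
        cst_coe (p.1:ℝ), cst_coe (p.2:ℝ), hnu0, hnv0] with ω e1 e2 ec1 ec2
        s1 s2 s3 s4 c1 c2 n1 n2
      rw [ec1] at e1
      rw [ec2] at e2
      rw [Pi.sub_apply] at s1 s2 s3 s4
      rw [s1, c1, s3, c2] at e1
      rw [s2, c1, s4, c2] at e2
      rw [abs_sub_comm ((p.1:ℝ)) (ξ ω), abs_sub_comm ((p.2:ℝ)) (η ω)] at e2
      rw [abs_sub_le_iff]
      simp only [hCf]
      constructor
      · nlinarith [abs_nonneg (ξ ω - (p.1:ℝ)), abs_nonneg (η ω - (p.2:ℝ)),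
          le_abs_self ((nrm u) ω), le_abs_self ((nrm v) ω),
          abs_nonneg ((nrm u) ω), abs_nonneg ((nrm v) ω)]
      · nlinarith [abs_nonneg (ξ ω - (p.1:ℝ)), abs_nonneg (η ω - (p.2:ℝ)),
          le_abs_self ((nrm u) ω), le_abs_self ((nrm v) ω),
          abs_nonneg ((nrm u) ω), abs_nonneg ((nrm v) ω)]
    have keyf : ∀ ω, ∀ p : ℚ × ℚ,
        |f (ξ ω) (η ω) ω - f (p.1:ℝ) (p.2:ℝ) ω| ≤
          (|ξ ω - (p.1:ℝ)| + |η ω - (p.2:ℝ)|) * Cf ω := by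
      intro ω p
      rw [abs_sub_le_iff]
      constructor
      · have := hf_lip (ξ ω) (η ω) (p.1:ℝ) (p.2:ℝ) ω
        linarith
      · have := hf_lip (p.1:ℝ) (p.2:ℝ) (ξ ω) (η ω) ω
        rw [abs_sub_comm ((p.1:ℝ)) (ξ ω), abs_sub_comm ((p.2:ℝ)) (η ω)] at this
        linarith
    filter_upwards [key, hEae] with ω hkey hωE
    show (T ξ η) ω = f (ξ ω) (η ω) ω
    have hbound : ∀ n : ℕ, |(T ξ η) ω - f (ξ ω) (η ω) ω| ≤ 4 * Cf ω / (n+1) := by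
      intro n
      have hn : (0:ℝ) < 1/(n+1) := by positivity
      obtain ⟨p1, hp1⟩ := exists_rat_near (ξ ω) hn
      obtain ⟨p2, hp2⟩ := exists_rat_near (η ω) hn
      have h1 := hkey (p1, p2)
      have h2 := keyf ω (p1, p2)
      have h3 : f ((p1:ℝ)) ((p2:ℝ)) ω = (T (cst μ (p1:ℝ)) (cst μ (p2:ℝ))) ω := by
        rw [hfgq ω hωE (p1, p2), (hEgood ω hωE).1 (p1, p2)]
      rw [h3] at h2
      have hsum : (|ξ ω - (p1:ℝ)| + |η ω - (p2:ℝ)|) * Cf ω ≤ 2 * Cf ω / (n+1) := by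
        have hle : |ξ ω - (p1:ℝ)| + |η ω - (p2:ℝ)| ≤ 2/(n+1) := by
          have e1 := hp1.le
          have e2 := hp2.le
          have e3 : 2/((n:ℝ)+1) = 1/((n:ℝ)+1) + 1/((n:ℝ)+1) := by ring
          linarith
        have := mul_le_mul_of_nonneg_right hle (hCf0 ω)
        calc (|ξ ω - (p1:ℝ)| + |η ω - (p2:ℝ)|) * Cf ω ≤ 2/(n+1) * Cf ω := this
          _ = 2 * Cf ω / (n+1) := by ring
      have htri := abs_sub_le ((T ξ η) ω) ((T (cst μ (p1:ℝ)) (cst μ (p2:ℝ))) ω)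
        (f (ξ ω) (η ω) ω)
      have habs2 : |(T (cst μ (p1:ℝ)) (cst μ (p2:ℝ))) ω - f (ξ ω) (η ω) ω|
          = |f (ξ ω) (η ω) ω - (T (cst μ (p1:ℝ)) (cst μ (p2:ℝ))) ω| := abs_sub_comm _ _
      rw [habs2] at htri
      have : |(T ξ η) ω - f (ξ ω) (η ω) ω| ≤ 2 * Cf ω / (n+1) + 2 * Cf ω / (n+1) := by
        calc |(T ξ η) ω - f (ξ ω) (η ω) ω| ≤ _ + _ := htri
          _ ≤ 2 * Cf ω / (n+1) + 2 * Cf ω / (n+1) :=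
            add_le_add (le_trans h1 hsum) (le_trans h2 hsum)
      calc |(T ξ η) ω - f (ξ ω) (η ω) ω| ≤ 2 * Cf ω / (n+1) + 2 * Cf ω / (n+1) := this
        _ = 4 * Cf ω / (n+1) := by ring
    by_contra hne
    have hpos : 0 < |(T ξ η) ω - f (ξ ω) (η ω) ω| := by
      rcases (abs_nonneg ((T ξ η) ω - f (ξ ω) (η ω) ω)).lt_or_eq with h | h
      · exact h
      · exact absurd (sub_eq_zero.mp (abs_eq_zero.mp h.symm)) hne
    set D := |(T ξ η) ω - f (ξ ω) (η ω) ω| with hD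
    obtain ⟨n, hn⟩ := exists_nat_gt (4 * Cf ω / D)
    have hn1 : (0:ℝ) < (n:ℝ) + 1 := by positivity
    have : 4 * Cf ω / ((n:ℝ)+1) < D := by
      rw [div_lt_iff₀ hn1]
      have h4 : 4 * Cf ω < D * ((n:ℝ)) + D := by
        have := (div_lt_iff₀ hpos).mp hn
        nlinarith
      nlinarith
    exact absurd (hbound n) (not_le.mpr this)
  -- Step 6: positivity of the fiberwise norms on G
  set mc : Ω → ℝ := fun ω => ⨅ q : {q : ℚ // (q:ℝ) ∈ Set.Icc (0:ℝ) 3},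
      f (hcp (q:ℝ)).1 (hcp (q:ℝ)).2 ω with hmc
  haveI : Nonempty {q : ℚ // (q:ℝ) ∈ Set.Icc (0:ℝ) 3} := ⟨⟨0, by norm_num⟩⟩
  have hmc_meas : Measurable mc := by
    simp only [hmc]
    exact Measurable.iInf fun q => hf_meas _ _ measurable_const measurable_const
  have hcpF_cont : ∀ ω, Continuous fun s : ℝ => f (hcp s).1 (hcp s).2 ω := by
    intro ω
    exact (hf_cont ω).comp
      ((continuous_fst.comp hcp_cont).prodMk (continuous_snd.comp hcp_cont))
  have hmc_le : ∀ ω ∈ E, ∀ t ∈ Set.Icc (0:ℝ) 3, mc ω ≤ f (hcp t).1 (hcp t).2 ω := by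
    intro ω hωE t ht
    refine le_of_forall_pos_le_add fun δ hδ => ?_
    obtain ⟨δ', hδ', hball⟩ := Metric.continuous_iff.mp (hcpF_cont ω) t δ hδ
    obtain ⟨q, hq1, hq2⟩ : ∃ q : ℚ, (q:ℝ) ∈ Set.Icc (0:ℝ) 3 ∧ dist (q:ℝ) t < δ' := by
      rcases eq_or_lt_of_le ht.1 with h0 | h0
      · exact ⟨0, by norm_num, by rw [← h0]; simpa using hδ'⟩
      · have hlt : max 0 (t - δ') < t := max_lt h0 (by linarith)
        obtain ⟨q, hqa, hqb⟩ := exists_rat_btwn hlt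
        refine ⟨q, ⟨le_of_lt (lt_of_le_of_lt (le_max_left _ _) hqa), le_trans hqb.le ht.2⟩, ?_⟩
        rw [Real.dist_eq, abs_sub_lt_iff]
        have := lt_of_le_of_lt (le_max_right 0 (t - δ')) hqa
        constructor <;> linarith
    have h1 : mc ω ≤ f (hcp (q:ℝ)).1 (hcp (q:ℝ)).2 ω := by
      simp only [hmc]
      exact ciInf_le ⟨0, by rintro y ⟨p, rfl⟩; exact hf0 _ _ ω⟩
        (⟨q, hq1⟩ : {q : ℚ // (q:ℝ) ∈ Set.Icc (0:ℝ) 3})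
    have h2 := hball _ hq2
    rw [Real.dist_eq, abs_sub_lt_iff] at h2
    linarith [h2.1]
  have hfpos : ∀ ω ∈ E, 0 < mc ω → ∀ x : ℝ × ℝ, x ≠ 0 → 0 < f x.1 x.2 ω := by
    intro ω hωE hmcpos x hx
    obtain ⟨t, ht, c, hc, hxe⟩ := hcp_cover x hx
    have h1 : f x.1 x.2 ω = |c| * f (hcp t).1 (hcp t).2 ω := by
      rw [hxe]
      simp only [Prod.smul_fst, Prod.smul_snd, smul_eq_mul]
      exact hfhom ω hωE c _ _
    rw [h1]
    exact mul_pos (abs_pos.mpr hc) (lt_of_lt_of_le hmcpos (hmc_le ω hωE t ht))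
  have hmc_pos : ∀ᵐ ω ∂μ, ω ∈ G → ω ∈ E → 0 < mc ω := by
    set Dset : Set Ω := (G ∩ E) ∩ {ω | mc ω ≤ 0} with hDset
    have hDm : MeasurableSet Dset :=
      (hGm.inter hEm).inter (measurableSet_le hmc_meas measurable_const)
    have hDG : Dset ⊆ G := fun ω hω => hω.1.1
    have hDE : Dset ⊆ E := fun ω hω => hω.1.2
    obtain ⟨τ₀, hτ₀meas, hτ₀⟩ := leastRoot Dset hDm
        (fun t ω => - f (hcp t).1 (hcp t).2 ω) (fun _ => 0) 3 (by norm_num)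
        (fun ω _ => (hcpF_cont ω).neg)
        (fun q => (hf_meas _ _ measurable_const measurable_const).neg)
        measurable_const
        (by
          intro ω hω
          obtain ⟨t, ht, hmin⟩ := (isCompact_Icc (a := (0:ℝ)) (b := 3)).exists_isMinOn
            (Set.nonempty_Icc.mpr (by norm_num)) ((hcpF_cont ω).continuousOn)
          refine ⟨t, ht, ?_⟩
          have hle : f (hcp t).1 (hcp t).2 ω ≤ mc ω := by
            simp only [hmc]
            exact le_ciInf fun q => hmin q.2
          have h0 : mc ω ≤ 0 := hω.2
          simp only [neg_nonneg]
          linarith)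
    have hfτ : ∀ ω ∈ Dset, f (hcp (τ₀ ω)).1 (hcp (τ₀ ω)).2 ω = 0 := by
      intro ω hω
      have h1 := (hτ₀ ω hω).2.1
      simp only [neg_nonneg] at h1
      exact le_antisymm h1 (hf0 _ _ ω)
    set a1 : Ω → ℝ := fun ω => (hcp (τ₀ ω)).1 with ha1
    set a2 : Ω → ℝ := fun ω => (hcp (τ₀ ω)).2 with ha2
    have ha1m : Measurable a1 := (continuous_fst.comp hcp_cont).measurable.comp hτ₀meas
    have ha2m : Measurable a2 := (continuous_snd.comp hcp_cont).measurable.comp hτ₀meas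
    set ξγ : L0 μ := AEEqFun.mk a1 ha1m.aestronglyMeasurable with hξγ
    set ηγ : L0 μ := AEEqFun.mk a2 ha2m.aestronglyMeasurable with hηγ
    have hz : sm (ξγ * ind μ Dset) u + sm (ηγ * ind μ Dset) v = 0 := by
      have hrw : sm (ξγ * ind μ Dset) u + sm (ηγ * ind μ Dset) v
          = sm (ind μ Dset) (sm ξγ u + sm ηγ v) := by
        rw [hRN.smul_add, mul_comm ξγ, mul_comm ηγ, hRN.mul_smul, hRN.mul_smul]
      rw [hrw]
      apply hRN.nrm_eq_zero
      rw [nrm_ind_smul hRN hDm]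
      apply AEEqFun.ext
      filter_upwards [AEEqFun.coeFn_mul (ind μ Dset) (nrm (sm ξγ u + sm ηγ v)),
        coeFn_ind hDm, subst ξγ ηγ, AEEqFun.coeFn_mk a1 ha1m.aestronglyMeasurable,
        AEEqFun.coeFn_mk a2 ha2m.aestronglyMeasurable,
        AEEqFun.coeFn_zero (μ := μ) (β := ℝ)] with ω e1 e2 e3 e4 e5 e6
      rw [e1, Pi.mul_apply, e2, e6, e3, e4, e5]
      by_cases hω : ω ∈ Dset
      · rw [hfτ ω hω]
        simp [Set.indicator_apply, hω]
      · simp [Set.indicator_apply, hω]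
    obtain ⟨hz1, hz2⟩ := indep_vanish Dset hDm hDG ξγ ηγ hz
    have hae1 : ∀ᵐ ω ∂μ, a1 ω * Set.indicator Dset (fun _ => (1:ℝ)) ω = 0 := by
      filter_upwards [AEEqFun.coeFn_mul ξγ (ind μ Dset), coeFn_ind hDm,
        AEEqFun.coeFn_mk a1 ha1m.aestronglyMeasurable,
        AEEqFun.coeFn_zero (μ := μ) (β := ℝ), AEEqFun.coeFn_le.mpr (le_of_eq hz1),
        AEEqFun.coeFn_le.mpr (le_of_eq hz1.symm)] with ω e1 e2 e3 e4 l1 l2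
      have : (ξγ * ind μ Dset) ω = (0 : L0 μ) ω := le_antisymm l1 l2
      rw [e1, Pi.mul_apply, e2, e3, e4] at this
      exact this
    have hae2 : ∀ᵐ ω ∂μ, a2 ω * Set.indicator Dset (fun _ => (1:ℝ)) ω = 0 := by
      filter_upwards [AEEqFun.coeFn_mul ηγ (ind μ Dset), coeFn_ind hDm,
        AEEqFun.coeFn_mk a2 ha2m.aestronglyMeasurable,
        AEEqFun.coeFn_zero (μ := μ) (β := ℝ), AEEqFun.coeFn_le.mpr (le_of_eq hz2),
        AEEqFun.coeFn_le.mpr (le_of_eq hz2.symm)] with ω e1 e2 e3 e4 l1 l2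
      have : (ηγ * ind μ Dset) ω = (0 : L0 μ) ω := le_antisymm l1 l2
      rw [e1, Pi.mul_apply, e2, e3, e4] at this
      exact this
    have hDnull : ∀ᵐ ω ∂μ, ω ∉ Dset := by
      filter_upwards [hae1, hae2] with ω e1 e2 hω
      rw [Set.indicator_of_mem hω, mul_one] at e1 e2
      exact hcp_ne (τ₀ ω) (Prod.ext e1 e2)
    filter_upwards [hDnull] with ω hω hωG hωE
    by_contra hcon
    exact hω ⟨⟨hωG, hωE⟩, le_of_not_gt hcon⟩
  -- Step 7: the chord construction
  set E₂ : Set Ω := E ∩ {ω | 0 < mc ω} with hE₂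
  have hE₂m : MeasurableSet E₂ := hEm.inter (measurableSet_lt measurable_const hmc_meas)
  have hE₂E : E₂ ⊆ E := Set.inter_subset_left
  have hGE₂ : ∀ᵐ ω ∂μ, ω ∈ G → ω ∈ E₂ := by
    filter_upwards [hmc_pos, hEae] with ω h1 h2 hωG
    exact ⟨h2, h1 hωG h2⟩
  set ε₀ : Ω → ℝ := fun ω => if 0 < ε ω ∧ ε ω ≤ 2 then ε ω else 1 with hε₀def
  have hε₀_meas : Measurable ε₀ := by
    refine Measurable.ite ?_ ε.measurable measurable_const
    exact (measurableSet_lt measurable_const ε.measurable).inter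
      (measurableSet_le ε.measurable measurable_const)
  have hε₀1 : ∀ ω, 0 < ε₀ ω ∧ ε₀ ω ≤ 2 := by
    intro ω
    simp only [hε₀def]
    split_ifs with h
    · exact h
    · norm_num
  have hε₀G : ∀ ω ∈ E, ω ∈ G → ε₀ ω = ε ω := by
    intro ω hωE hωG
    simp only [hε₀def]
    rw [if_pos ((hEgood ω hωE).2.2.2.2 hωG)]
  set den : Ω → ℝ := fun ω => f 1 0 ω with hden
  have hden_meas : Measurable den := hf_meas _ _ measurable_const measurable_const
  have hden_pos : ∀ ω ∈ E₂, 0 < den ω := by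
    intro ω hω
    have := hmc_le ω hω.1 0 (by norm_num)
    rw [hcp_zero] at this
    exact lt_of_lt_of_le hω.2 this
  set w2 : ℝ → Ω → ℝ × ℝ := fun t ω => (f (hcp t).1 (hcp t).2 ω)⁻¹ • hcp t with hw2
  set g2 : ℝ → Ω → ℝ := fun t ω => f ((den ω)⁻¹ - (w2 t ω).1) (0 - (w2 t ω).2) ω with hg2
  have hw2_cont : ∀ ω ∈ E₂, Continuous fun t => w2 t ω := by
    intro ω hω
    simp only [hw2]
    refine Continuous.smul (Continuous.inv₀ (hcpF_cont ω) ?_) hcp_cont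
    intro t
    exact (hfpos ω hω.1 hω.2 (hcp t) (hcp_ne t)).ne'
  have hg2_cont : ∀ ω ∈ E₂, Continuous fun t => g2 t ω := by
    intro ω hω
    simp only [hg2]
    exact (hf_cont ω).comp
      ((continuous_const.sub (continuous_fst.comp (hw2_cont ω hω))).prodMk
        (continuous_const.sub (continuous_snd.comp (hw2_cont ω hω))))
  have hg2_meas : ∀ q : ℚ, Measurable (g2 (q:ℝ)) := by
    intro q
    have hwm : Measurable fun ω => f (hcp (q:ℝ)).1 (hcp (q:ℝ)).2 ω :=
      hf_meas _ _ measurable_const measurable_const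
    have hwm1 : Measurable fun ω => (w2 (q:ℝ) ω).1 := by
      simp only [hw2, Prod.smul_fst, smul_eq_mul]
      exact hwm.inv.mul measurable_const
    have hwm2 : Measurable fun ω => (w2 (q:ℝ) ω).2 := by
      simp only [hw2, Prod.smul_snd, smul_eq_mul]
      exact hwm.inv.mul measurable_const
    simp only [hg2]
    exact hf_meas _ _ ((hden_meas.inv).sub hwm1) ((measurable_const).sub hwm2)
  have hg2_three : ∀ ω ∈ E₂, g2 3 ω = 2 := by
    intro ω hω
    have hden' : 0 < f 1 0 ω := by
      have := hden_pos ω hω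
      simpa [hden] using this
    have h1 : f (-1 : ℝ) (0 : ℝ) ω = f 1 0 ω := by
      have h := hfhom ω hω.1 (-1) 1 0
      norm_num at h
      exact h
    have h2 : f (2 * (f 1 0 ω)⁻¹) (0 : ℝ) ω = 2 := by
      have h := hfhom ω hω.1 (2 * (f 1 0 ω)⁻¹) 1 0
      norm_num at h
      rw [h, abs_of_pos (by positivity)]
      field_simp
    simp only [hg2, hw2, hden, hcp_three]
    simp only [Prod.smul_fst, Prod.smul_snd, smul_eq_mul, h1]
    rw [show (f 1 0 ω)⁻¹ - (f 1 0 ω)⁻¹ * (-1) = 2 * (f 1 0 ω)⁻¹ by ring,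
      show (0:ℝ) - (f 1 0 ω)⁻¹ * 0 = 0 by ring]
    exact h2
  have hg2_zero : ∀ ω ∈ E₂, g2 0 ω = 0 := by
    intro ω hω
    simp only [hg2, hw2, hden, hcp_zero]
    simp only [Prod.smul_fst, Prod.smul_snd, smul_eq_mul]
    rw [show (f 1 0 ω)⁻¹ - (f 1 0 ω)⁻¹ * 1 = 0 by ring,
      show (0:ℝ) - (f 1 0 ω)⁻¹ * 0 = 0 by ring]
    exact hf00 ω hω.1
  obtain ⟨τ, hτ_meas, hτ⟩ : ∃ τ : Ω → ℝ, Measurable τ ∧ ∀ ω ∈ E₂,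
      τ ω ∈ Set.Icc (0:ℝ) 3 ∧ ε₀ ω ≤ g2 (τ ω) ω ∧
      ∀ t ∈ Set.Ico (0:ℝ) (τ ω), g2 t ω < ε₀ ω := by
    refine leastRoot E₂ hE₂m g2 ε₀ 3 (by norm_num) hg2_cont hg2_meas hε₀_meas ?_
    intro ω hω
    exact ⟨3, by norm_num, le_of_le_of_eq (hε₀1 ω).2 (hg2_three ω hω).symm⟩
  have hg2τ : ∀ ω ∈ E₂, g2 (τ ω) ω = ε₀ ω := by
    intro ω hω
    obtain ⟨hτIcc, hτge, hτmin⟩ := hτ ω hω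
    refine le_antisymm ?_ hτge
    have hτpos : 0 < τ ω := by
      rcases eq_or_lt_of_le hτIcc.1 with h0 | h0
      · exfalso
        have h2 : ε₀ ω ≤ g2 0 ω := by rw [h0]; exact hτge
        rw [hg2_zero ω hω] at h2
        linarith [(hε₀1 ω).1]
      · exact h0
    have hseq : Tendsto (fun n : ℕ => τ ω * (1 - 1/((n:ℝ)+1))) atTop (nhds (τ ω)) := by
      have h1 : Tendsto (fun n : ℕ => 1 - 1/((n:ℝ)+1)) atTop (nhds 1) := by
        simpa using (tendsto_const_nhds (x := (1:ℝ))).sub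
          tendsto_one_div_add_atTop_nhds_zero_nat
      have := (tendsto_const_nhds (x := τ ω)).mul h1
      simpa using this
    have hlim : Tendsto (fun n : ℕ => g2 (τ ω * (1 - 1/((n:ℝ)+1))) ω) atTop
        (nhds (g2 (τ ω) ω)) :=
      ((hg2_cont ω hω).continuousAt (x := τ ω)).tendsto.comp hseq
    refine le_of_tendsto hlim (Eventually.of_forall fun n => ?_)
    refine le_of_lt (hτmin _ ⟨?_, ?_⟩)
    · have hfr : (0:ℝ) ≤ 1 - 1/((n:ℝ)+1) := by
        have h1 : 1/((n:ℝ)+1) ≤ 1 := by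
          rw [div_le_one (by positivity)]
          simp
        linarith
      exact mul_nonneg hτIcc.1 hfr
    · have hfr : 1 - 1/((n:ℝ)+1) < 1 := by
        have h1 : 0 < 1/((n:ℝ)+1) := by positivity
        linarith
      nlinarith
  -- Step 8: assembling the two elements of the sphere
  set A1 : Ω → ℝ := fun ω => (den ω)⁻¹ with hA1
  have hA1m : Measurable A1 := hden_meas.inv
  set Q1 : Ω → ℝ := fun ω => (w2 (τ ω) ω).1 with hQ1
  set Q2 : Ω → ℝ := fun ω => (w2 (τ ω) ω).2 with hQ2
  have hfτm : Measurable fun ω => f (hcp (τ ω)).1 (hcp (τ ω)).2 ω :=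
    hf_meas _ _ ((continuous_fst.comp hcp_cont).measurable.comp hτ_meas)
      ((continuous_snd.comp hcp_cont).measurable.comp hτ_meas)
  have hQ1m : Measurable Q1 := by
    simp only [hQ1, hw2, Prod.smul_fst, smul_eq_mul]
    exact hfτm.inv.mul ((continuous_fst.comp hcp_cont).measurable.comp hτ_meas)
  have hQ2m : Measurable Q2 := by
    simp only [hQ2, hw2, Prod.smul_snd, smul_eq_mul]
    exact hfτm.inv.mul ((continuous_snd.comp hcp_cont).measurable.comp hτ_meas)
  set ξx : L0 μ := AEEqFun.mk A1 hA1m.aestronglyMeasurable * ind μ G with hξx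
  set ξy : L0 μ := AEEqFun.mk Q1 hQ1m.aestronglyMeasurable * ind μ G with hξy
  set ηy : L0 μ := AEEqFun.mk Q2 hQ2m.aestronglyMeasurable * ind μ G with hηy
  set x : S := sm ξx u + sm (0 : L0 μ) v with hx
  set y : S := sm ξy u + sm ηy v with hy
  have hξx_coe : ∀ᵐ ω ∂μ, ξx ω = A1 ω * Set.indicator G (fun _ => (1:ℝ)) ω := by
    filter_upwards [AEEqFun.coeFn_mul (AEEqFun.mk A1 hA1m.aestronglyMeasurable) (ind μ G),
      AEEqFun.coeFn_mk A1 hA1m.aestronglyMeasurable, coeFn_ind hGm] with ω e1 e2 e3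
    rw [hξx, e1, Pi.mul_apply, e2, e3]
  have hξy_coe : ∀ᵐ ω ∂μ, ξy ω = Q1 ω * Set.indicator G (fun _ => (1:ℝ)) ω := by
    filter_upwards [AEEqFun.coeFn_mul (AEEqFun.mk Q1 hQ1m.aestronglyMeasurable) (ind μ G),
      AEEqFun.coeFn_mk Q1 hQ1m.aestronglyMeasurable, coeFn_ind hGm] with ω e1 e2 e3
    rw [hξy, e1, Pi.mul_apply, e2, e3]
  have hηy_coe : ∀ᵐ ω ∂μ, ηy ω = Q2 ω * Set.indicator G (fun _ => (1:ℝ)) ω := by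
    filter_upwards [AEEqFun.coeFn_mul (AEEqFun.mk Q2 hQ2m.aestronglyMeasurable) (ind μ G),
      AEEqFun.coeFn_mk Q2 hQ2m.aestronglyMeasurable, coeFn_ind hGm] with ω e1 e2 e3
    rw [hηy, e1, Pi.mul_apply, e2, e3]
  have hzero_coe : ∀ᵐ ω ∂μ, (0 : L0 μ) ω = 0 := by
    filter_upwards [AEEqFun.coeFn_zero (μ := μ) (β := ℝ)] with ω e1
    rw [e1]
    rfl
  -- the norm of x
  have hnrmx : nrm x = ind μ G := by
    apply AEEqFun.ext
    rw [hx]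
    filter_upwards [subst ξx (0 : L0 μ), hξx_coe, hzero_coe, coeFn_ind hGm, hGE₂, hEae]
      with ω hs h1 h2 hind hGE hE
    rw [hs, h1, h2, hind]
    by_cases hωG : ω ∈ G
    · have hω₂ : ω ∈ E₂ := hGE hωG
      have hden' : 0 < f 1 0 ω := by simpa [hden] using hden_pos ω hω₂
      simp only [Set.indicator_of_mem hωG, mul_one, hA1, hden]
      have h := hfhom ω hω₂.1 ((f 1 0 ω)⁻¹) 1 0
      norm_num at h
      rw [h, abs_of_pos (by positivity)]
      exact inv_mul_cancel₀ hden'.ne'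
    · simp only [Set.indicator_of_notMem hωG, mul_zero]
      exact hf00 ω hE
  -- the norm of y
  have hnrmy : nrm y = ind μ G := by
    apply AEEqFun.ext
    rw [hy]
    filter_upwards [subst ξy ηy, hξy_coe, hηy_coe, coeFn_ind hGm, hGE₂, hEae]
      with ω hs h1 h2 hind hGE hE
    rw [hs, h1, h2, hind]
    by_cases hωG : ω ∈ G
    · have hω₂ : ω ∈ E₂ := hGE hωG
      have hfτpos : 0 < f (hcp (τ ω)).1 (hcp (τ ω)).2 ω :=
        hfpos ω hω₂.1 hω₂.2 _ (hcp_ne _)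
      simp only [Set.indicator_of_mem hωG, mul_one, hQ1, hQ2, hw2, Prod.smul_fst,
        Prod.smul_snd, smul_eq_mul]
      rw [hfhom ω hω₂.1 ((f (hcp (τ ω)).1 (hcp (τ ω)).2 ω)⁻¹) ((hcp (τ ω)).1)
        ((hcp (τ ω)).2), abs_of_pos (by positivity)]
      exact inv_mul_cancel₀ hfτpos.ne'
    · simp only [Set.indicator_of_notMem hωG, mul_zero]
      exact hf00 ω hE
  -- the norm of x - y
  have hxy : x - y = sm (ξx - ξy) u + sm ((0 : L0 μ) - ηy) v := by
    rw [hx, hy, sub_smul' hRN, sub_smul' hRN]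
    abel
  have hnrmxy : nrm (x - y) = ε * ind μ G := by
    apply AEEqFun.ext
    rw [hxy]
    filter_upwards [subst (ξx - ξy) ((0 : L0 μ) - ηy), AEEqFun.coeFn_sub ξx ξy,
      AEEqFun.coeFn_sub (0 : L0 μ) ηy, hξx_coe, hξy_coe, hηy_coe, hzero_coe,
      coeFn_ind hGm, AEEqFun.coeFn_mul ε (ind μ G), hGE₂, hEae]
      with ω hs s1 s2 h1 h2 h3 h0 hind hmul hGE hE
    rw [hs, s1, s2, Pi.sub_apply, Pi.sub_apply, h1, h2, h3, h0, hmul, Pi.mul_apply, hind]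
    by_cases hωG : ω ∈ G
    · have hω₂ : ω ∈ E₂ := hGE hωG
      simp only [Set.indicator_of_mem hωG, mul_one]
      have hval := hg2τ ω hω₂
      rw [hε₀G ω hE hωG] at hval
      simp only [hg2, hden, hA1, hQ1, hQ2] at hval ⊢
      exact hval
    · simp only [Set.indicator_of_notMem hωG, mul_zero, sub_zero, zero_sub, neg_zero]
      exact hf00 ω hE
  -- the norm of x + x
  have hxx : x + x = sm (ξx + ξx) u + sm ((0 : L0 μ) + (0 : L0 μ)) v := by
    rw [hx, hRN.add_smul, hRN.add_smul]
    abel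
  have hnxx : ∀ᵐ ω ∂μ, (nrm (x + x)) ω = 2 * Set.indicator G (fun _ => (1:ℝ)) ω := by
    rw [hxx]
    filter_upwards [subst (ξx + ξx) ((0 : L0 μ) + (0 : L0 μ)),
      AEEqFun.coeFn_add ξx ξx, AEEqFun.coeFn_add (0 : L0 μ) (0 : L0 μ), hξx_coe,
      hzero_coe, hGE₂, hEae] with ω hs a1 a2 h1 h0 hGE hE
    rw [hs, a1, a2, Pi.add_apply, Pi.add_apply, h1, h0]
    by_cases hωG : ω ∈ G
    · have hω₂ : ω ∈ E₂ := hGE hωG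
      have hden' : 0 < f 1 0 ω := by simpa [hden] using hden_pos ω hω₂
      simp only [Set.indicator_of_mem hωG, mul_one, hA1, hden]
      have h := hfhom ω hω₂.1 ((f 1 0 ω)⁻¹ + (f 1 0 ω)⁻¹) 1 0
      rw [mul_one, mul_zero] at h
      rw [show ((0:ℝ) + 0) = (0:ℝ) by norm_num, h, abs_of_pos (by positivity)]
      rw [add_mul, inv_mul_cancel₀ hden'.ne']
      norm_num
    · simp only [Set.indicator_of_notMem hωG, mul_zero, add_zero]
      exact hf00 ω hE
  -- the norm of the midpoint
  have hmid : ∀ᵐ ω ∂μ, (nrm (mid μ sm x y)) ω = 1/2 * (nrm (x + y)) ω := by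
    have h : nrm (mid μ sm x y) = |cst μ (1/2)| * nrm (x + y) := by
      rw [show mid μ sm x y = sm (cst μ (1/2)) (x + y) from rfl, hRN.nrm_smul]
    rw [h]
    filter_upwards [AEEqFun.coeFn_mul (|cst μ (1/2)|) (nrm (x + y)),
      AEEqFun.coeFn_abs (cst μ (1/2)), cst_coe (1/2 : ℝ)] with ω e1 e2 e3
    rw [e1, Pi.mul_apply, e2, e3]
    norm_num
  -- the triangle inequality for x + x
  have htri : ∀ᵐ ω ∂μ, (nrm (x + x)) ω ≤ (nrm (x + y)) ω + (nrm (x - y)) ω := by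
    have h0 : nrm (x + x) ≤ nrm (x + y) + nrm (x - y) := by
      have he : x + x = (x + y) + (x - y) := by abel
      rw [he]
      exact hRN.nrm_add _ _
    rw [← AEEqFun.coeFn_le] at h0
    filter_upwards [h0, AEEqFun.coeFn_add (nrm (x + y)) (nrm (x - y))] with ω e1 e2
    rw [e2, Pi.add_apply] at e1
    exact e1
  -- pointwise values of the norms
  have hcx : ⇑(nrm x) =ᵐ[μ] Set.indicator G (fun _ => (1:ℝ)) := by
    rw [hnrmx]
    exact coeFn_ind hGm
  have hcy : ⇑(nrm y) =ᵐ[μ] Set.indicator G (fun _ => (1:ℝ)) := by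
    rw [hnrmy]
    exact coeFn_ind hGm
  have hcxy : ∀ᵐ ω ∂μ, (nrm (x - y)) ω = ε ω * Set.indicator G (fun _ => (1:ℝ)) ω := by
    rw [hnrmxy]
    filter_upwards [AEEqFun.coeFn_mul ε (ind μ G), coeFn_ind hGm] with ω e1 e2
    rw [e1, Pi.mul_apply, e2]
  -- x and y lie on the random unit sphere
  have hxsphere : x ∈ sphere nrm := ⟨G, hGm, hGpos, hnrmx⟩
  have hysphere : y ∈ sphere nrm := ⟨G, hGm, hGpos, hnrmy⟩
  -- G is a.e. contained in B_{xy}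
  have hBae : ∀ᵐ ω ∂μ, ω ∈ G → ω ∈ Bxy nrm x y := by
    filter_upwards [hcx, hcy, hcxy, hEae] with ω e1 e2 e3 hE hωG
    have hεpos : 0 < ε ω := ((hEgood ω hE).2.2.2.2 hωG).1
    refine ⟨⟨?_, ?_⟩, ?_⟩
    · show 0 < (nrm x) ω
      rw [e1, Set.indicator_of_mem hωG]
      norm_num
    · show 0 < (nrm y) ω
      rw [e2, Set.indicator_of_mem hωG]
      norm_num
    · show 0 < (nrm (x - y)) ω
      rw [e3, Set.indicator_of_mem hωG, mul_one]
      exact hεpos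
  have hBsub : aeSub μ G (Bxy nrm x y) := by
    have h0 : μ {ω | ¬ (ω ∈ G → ω ∈ Bxy nrm x y)} = 0 := MeasureTheory.ae_iff.mp hBae
    show μ (G \ Bxy nrm x y) = 0
    convert h0 using 2
    ext ω
    simp [Set.mem_diff, Classical.not_imp]
  -- the distance constraint
  have hcons : ε * ind μ G ≤ ind μ G * nrm (x - y) := by
    rw [← AEEqFun.coeFn_le]
    filter_upwards [AEEqFun.coeFn_mul ε (ind μ G), AEEqFun.coeFn_mul (ind μ G) (nrm (x - y)),
      coeFn_ind hGm, hcxy] with ω e1 e2 e3 e4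
    rw [e1, e2, Pi.mul_apply, Pi.mul_apply, e3, e4]
    by_cases hωG : ω ∈ G <;> simp [Set.indicator_apply, hωG]
  -- the element of modSet
  have hzmem : ind μ G - ind μ G * nrm (mid μ sm x y) ∈ modSet μ sm nrm G ε :=
    ⟨x, hxsphere, y, hysphere, hBsub, hcons, rfl⟩
  refine le_trans (hd.1 hzmem) ?_
  rw [← AEEqFun.coeFn_le]
  filter_upwards [AEEqFun.coeFn_sub (ind μ G) (ind μ G * nrm (mid μ sm x y)),
    AEEqFun.coeFn_mul (ind μ G) (nrm (mid μ sm x y)), coeFn_ind hGm, hmid, htri, hnxx,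
    hcxy, AEEqFun.coeFn_mul (cst μ (1/2) * ε) (ind μ G), AEEqFun.coeFn_mul (cst μ (1/2)) ε,
    cst_coe (1/2 : ℝ), hEae] with ω e1 e2 e3 e4 e5 e6 e7 e8 e9 e10 hE
  rw [e1, Pi.sub_apply, e2, Pi.mul_apply, e3, e8, Pi.mul_apply, e9, Pi.mul_apply, e10, e4]
  rw [e3]
  by_cases hωG : ω ∈ G
  · have hε2 : ε ω ≤ 2 := ((hEgood ω hE).2.2.2.2 hωG).2
    rw [Set.indicator_of_mem hωG] at e6 ⊢
    rw [Set.indicator_of_mem hωG, mul_one] at e7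
    rw [e7] at e5
    rw [e6] at e5
    -- e5 : 2 * 1 ≤ nrm (x+y) ω + ε ω
    nlinarith [e5]
  · rw [Set.indicator_of_notMem hωG]
    simp

end RNM
end
end

section
/- Let S be an RN module over ℝ with base (Ω, F, P), let E ∈ F̃ with P(E) > 0, and let x, y ∈ S be L⁰-independent on E. Then for every α ∈ L⁰(F,ℝ), ‖(cos α)·x + (sin α)·y‖ > 0 on E, where cos α, sin α ∈ L⁰(F,ℝ) denote the equivalence classes of ω ↦ cos(α⁰(ω)) and ω ↦ sin(α⁰(ω)) for a representative α⁰ of α. -/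
open MeasureTheory Filter Set

noncomputable section

namespace RNM

variable {Ω : Type*} [MeasurableSpace Ω]

variable {μ : Measure Ω} {S : Type*} [AddCommGroup S]

/-- `cos α ∈ L⁰(F,ℝ)`. -/
def cosL (μ : Measure Ω) (α : L0 μ) : L0 μ := AEEqFun.comp Real.cos Real.continuous_cos α

/-- `sin α ∈ L⁰(F,ℝ)`. -/
def sinL (μ : Measure Ω) (α : L0 μ) : L0 μ := AEEqFun.comp Real.sin Real.continuous_sin α

/-- If `x` and `y` are `L⁰`-independent on `E`, then for every `α ∈ L⁰(F,ℝ)`,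
`‖(cos α) x + (sin α) y‖ > 0` on `E`. -/
theorem norm_trig_combination_pos {Ω : Type*} [MeasurableSpace Ω] (μ : Measure Ω)
    [IsProbabilityMeasure μ] {S : Type*} [AddCommGroup S]
    (sm : L0 μ → S → S) (nrm : S → L0 μ) (hRN : IsRNModule μ sm nrm)
    (E : Set Ω) (hEm : MeasurableSet E) (hEpos : 0 < μ E)
    (x y : S) (hind : Indep sm x y E) :
    ∀ α : L0 μ, ∀ᵐ ω ∂μ, ω ∈ E → 0 < (nrm (sm (cosL μ α) x + sm (sinL μ α) y)) ω := by
  intro α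
  set z := sm (cosL μ α) x + sm (sinL μ α) y with hz
  set n := nrm z with hn
  -- the bad set where the norm vanishes on E
  set A : Set Ω := E ∩ {ω | n ω ≤ 0} with hA
  have hAmeas : MeasurableSet A := hEm.inter (n.measurable measurableSet_Iic)
  have hAE : A ⊆ E := Set.inter_subset_left
  have hindA : ⇑(ind μ A) =ᵐ[μ] A.indicator (fun _ => (1:ℝ)) := by
    simp only [ind, dif_pos hAmeas]
    exact AEEqFun.coeFn_mk _ _
  have hindE : ⇑(ind μ E) =ᵐ[μ] E.indicator (fun _ => (1:ℝ)) := by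
    simp only [ind, dif_pos hEm]
    exact AEEqFun.coeFn_mk _ _
  -- ind A * ind E = ind A
  have key : ind μ A * ind μ E = ind μ A := by
    apply AEEqFun.ext
    filter_upwards [AEEqFun.coeFn_mul (ind μ A) (ind μ E), hindA, hindE] with ω h1 h2 h3
    rw [h1, Pi.mul_apply, h2, h3]
    by_cases hω : ω ∈ A
    · simp [hω, hAE hω]
    · simp [hω]
  have hnonneg : ∀ᵐ ω ∂μ, 0 ≤ n ω := by
    have := AEEqFun.coeFn_le.mpr (hRN.nrm_nonneg z)
    filter_upwards [this, AEEqFun.coeFn_zero (μ := μ) (β := ℝ)] with ω h1 h2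
    rw [← hn] at h1
    calc (0:ℝ) = (0 : L0 μ) ω := h2.symm
    _ ≤ n ω := h1
  -- |ind A| * n = 0
  have habs : |ind μ A| * n = 0 := by
    apply AEEqFun.ext
    filter_upwards [AEEqFun.coeFn_mul |ind μ A| n, AEEqFun.coeFn_abs (ind μ A), hindA,
      hnonneg, AEEqFun.coeFn_zero (μ := μ) (β := ℝ)] with ω h1 h2 h3 h4 h5
    rw [h1, Pi.mul_apply, h2, h3, h5]
    by_cases hω : ω ∈ A
    · have : n ω ≤ 0 := hω.2
      have : n ω = 0 := le_antisymm this h4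
      simp [this]
    · simp [hω]
  -- sm (ind A) z = 0
  have hsm0 : sm (cosL μ α * ind μ A) x + sm (sinL μ α * ind μ A) y = 0 := by
    have e1 : sm (cosL μ α * ind μ A) x = sm (ind μ A) (sm (cosL μ α) x) := by
      rw [mul_comm, hRN.mul_smul]
    have e2 : sm (sinL μ α * ind μ A) y = sm (ind μ A) (sm (sinL μ α) y) := by
      rw [mul_comm, hRN.mul_smul]
    rw [e1, e2, ← hRN.smul_add]
    apply hRN.nrm_eq_zero
    rw [hRN.nrm_smul, ← hn, habs]
  -- apply independence
  have hmulE : ∀ ξ : L0 μ, (ξ * ind μ A) * ind μ E = ξ * ind μ A := by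
    intro ξ; rw [mul_assoc, key]
  have := hind (cosL μ α * ind μ A) (sinL μ α * ind μ A) (by rw [hmulE, hmulE]; exact hsm0)
  obtain ⟨hc0, hs0⟩ := this
  rw [hmulE] at hc0
  rw [hmulE] at hs0
  -- translate to a.e. statements
  have hc : ∀ᵐ ω ∂μ, Real.cos (α ω) * (A.indicator (fun _ => (1:ℝ)) ω) = 0 := by
    have := hc0 ▸ (AEEqFun.coeFn_mul (cosL μ α) (ind μ A))
    filter_upwards [this.symm, hindA, AEEqFun.coeFn_zero (μ := μ) (β := ℝ),
      AEEqFun.coeFn_comp Real.cos Real.continuous_cos α] with ω h1 h2 h3 h4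
    have h4' : (cosL μ α) ω = Real.cos (α ω) := h4
    rw [← h2, ← h4']
    rw [Pi.mul_apply] at h1
    rw [h1]
    simpa using h3
  have hs : ∀ᵐ ω ∂μ, Real.sin (α ω) * (A.indicator (fun _ => (1:ℝ)) ω) = 0 := by
    have := hs0 ▸ (AEEqFun.coeFn_mul (sinL μ α) (ind μ A))
    filter_upwards [this.symm, hindA, AEEqFun.coeFn_zero (μ := μ) (β := ℝ),
      AEEqFun.coeFn_comp Real.sin Real.continuous_sin α] with ω h1 h2 h3 h4
    have h4' : (sinL μ α) ω = Real.sin (α ω) := h4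
    rw [← h2, ← h4']
    rw [Pi.mul_apply] at h1
    rw [h1]
    simpa using h3
  filter_upwards [hc, hs, hnonneg] with ω hcω hsω hnω hEω
  by_contra hle
  push_neg at hle
  have hωA : ω ∈ A := ⟨hEω, hle⟩
  rw [Set.indicator_of_mem hωA, mul_one] at hcω hsω
  have := Real.sin_sq_add_cos_sq (α ω)
  rw [hcω, hsω] at this
  norm_num at this

end RNM
end
end
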